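/- Let α > 1/2, set γ(α) = α/(2α−1) and z(y,α) = y²(2α−1)/2, and let G(y,α) = y·M(γ(α), 3/2, z(y,α)) + [Γ(γ(α)−1/2) / (√(2(2α−1))·Γ(γ(α)))]·M(γ(α)−1/2, 1/2, z(y,α)). Then G(y,α) → 0 as y → −∞. -/

import Mathlib

open Real Filter Polynomial

/-- Confluent hypergeometric function of the first kind,
`M(γ,β,z) = ∑ (γ)⁽ⁿ⁾ zⁿ / ((β)⁽ⁿ⁾ n!)`. -/
noncomputable def M (γ β z : ℝ) : ℝ :=
  ∑' n : ℕ, ((ascPochhammer ℝ n).eval γ * z ^ n) /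
    ((ascPochhammer ℝ n).eval β * (Nat.factorial n : ℝ))

/-- The candidate solution for `α > 1/2`. -/
noncomputable def G (α y : ℝ) : ℝ :=
  y * M (α / (2 * α - 1)) (3 / 2) (y ^ 2 * (2 * α - 1) / 2) +
    Real.Gamma (α / (2 * α - 1) - 1 / 2) /
      (Real.sqrt (2 * (2 * α - 1)) * Real.Gamma (α / (2 * α - 1))) *
    M (α / (2 * α - 1) - 1 / 2) (1 / 2) (y ^ 2 * (2 * α - 1) / 2)

open MeasureTheory Set Topology

lemma asc_Gamma (a : ℝ) (ha : 0 < a) (n : ℕ) :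
    Real.Gamma (a + n) = Real.Gamma a * (ascPochhammer ℝ n).eval a := by
  induction n with
  | zero => simp
  | succ n ih =>
    have h1 : a + (n + 1 : ℕ) = (a + n) + 1 := by push_cast; ring
    have h2 : (a + (n:ℝ)) ≠ 0 := by positivity
    rw [h1, Real.Gamma_add_one h2, ih, ascPochhammer_succ_eval]
    ring

lemma fact_two_mul (m : ℕ) :
    ((2 * m).factorial : ℝ) = 4 ^ m * m.factorial * (ascPochhammer ℝ m).eval (1/2) := by
  induction m with
  | zero => simp
  | succ m ih =>
    have : 2 * (m + 1) = (2 * m + 1) + 1 := by ring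
    rw [this, Nat.factorial_succ, Nat.factorial_succ, Nat.factorial_succ,
      ascPochhammer_succ_eval]
    push_cast
    rw [ih]
    ring


lemma asc_three_half (m : ℕ) :
    (ascPochhammer ℝ m).eval (3/2) = (2 * m + 1) * (ascPochhammer ℝ m).eval (1/2) := by
  induction m with
  | zero => simp
  | succ m ih =>
    rw [ascPochhammer_succ_eval, ascPochhammer_succ_eval, ih]
    push_cast
    ring

lemma fact_two_mul_add_one (m : ℕ) :
    ((2 * m + 1).factorial : ℝ) = 4 ^ m * m.factorial * (ascPochhammer ℝ m).eval (3/2) := by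
  rw [Nat.factorial_succ, asc_three_half]
  push_cast
  rw [fact_two_mul]
  ring

lemma summable_M (a β z : ℝ) (ha : 0 < a) (hβ : 0 < β) (hz : 0 < z) :
    Summable (fun n : ℕ => (ascPochhammer ℝ n).eval a * z ^ n /
      ((ascPochhammer ℝ n).eval β * (Nat.factorial n : ℝ))) := by
  set f : ℕ → ℝ := fun n => (ascPochhammer ℝ n).eval a * z ^ n /
      ((ascPochhammer ℝ n).eval β * (Nat.factorial n : ℝ)) with hf
  have hpos : ∀ n, 0 < f n := by
    intro n
    have := ascPochhammer_pos n a ha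
    have := ascPochhammer_pos n β hβ
    have : (0:ℝ) < (Nat.factorial n : ℝ) := by positivity
    positivity
  refine summable_of_ratio_norm_eventually_le (r := 1/2) (by norm_num) ?_
  rw [Filter.eventually_atTop]
  refine ⟨⌈2 * z * (a + 1)⌉₊, fun m hm => ?_⟩
  have hm' : 2 * z * (a + 1) ≤ (m : ℝ) := le_trans (Nat.le_ceil _) (by exact_mod_cast hm)
  have hstep : f (m + 1) = f m * ((a + m) * z / ((β + m) * (m + 1))) := by
    rw [hf]
    simp only [ascPochhammer_succ_eval, Nat.factorial_succ]
    have h1 : (ascPochhammer ℝ m).eval β ≠ 0 := (ascPochhammer_pos m β hβ).ne'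
    have h2 : ((Nat.factorial m : ℝ)) ≠ 0 := by positivity
    have h3 : (β + (m:ℝ)) ≠ 0 := by positivity
    have h4 : ((m:ℝ) + 1) ≠ 0 := by positivity
    push_cast
    field_simp
    ring
  have hratio : (a + m) * z / ((β + m) * (m + 1)) ≤ 1/2 := by
    rw [div_le_iff₀ (by positivity)]
    have key : a + (m:ℝ) ≤ (a + 1) * (m + 1) := by nlinarith [Nat.cast_nonneg (α := ℝ) m]
    nlinarith [Nat.cast_nonneg (α := ℝ) m]
  have h1 := hpos m
  have h2 := hpos (m + 1)
  rw [Real.norm_eq_abs, Real.norm_eq_abs, abs_of_pos h1, abs_of_pos h2, hstep]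
  have hr0 : 0 ≤ (a + m) * z / ((β + m) * (m + 1)) := by positivity
  nlinarith

lemma moment (p : ℝ) (hp : -1 < p) :
    ∫ s in Ioi (0:ℝ), s ^ p * Real.exp (-s^2/2) =
      2 ^ ((p-1)/2) * Real.Gamma ((p+1)/2) := by
  have h := integral_rpow_mul_exp_neg_mul_rpow (p := 2) (q := p) (b := 1/2)
    two_pos hp (by norm_num)
  rw [show ∫ x in Ioi (0:ℝ), x ^ p * Real.exp (-(1/2) * x ^ (2:ℝ)) =
      ∫ s in Ioi (0:ℝ), s ^ p * Real.exp (-s^2/2) from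
    setIntegral_congr_fun measurableSet_Ioi (fun x hx => by
      rw [Real.rpow_two]; ring_nf)] at h
  rw [h, show ((1:ℝ)/2) = 2⁻¹ by norm_num, Real.inv_rpow (by norm_num),
    ← Real.rpow_neg (by norm_num), show (2:ℝ)⁻¹ = 2 ^ (-1:ℝ) by
      rw [Real.rpow_neg_one]]
  rw [← Real.rpow_add (by norm_num)]
  congr 1
  ring

lemma measurable_kernel (p c : ℝ) :
    Measurable (fun s : ℝ => s ^ p * Real.exp (c * s - s^2/2)) := by
  fun_prop

lemma integrable_kernel (p c : ℝ) (hp : -1 < p) :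
    IntegrableOn (fun s : ℝ => s ^ p * Real.exp (c * s - s^2/2)) (Ioi 0) := by
  have hbound : IntegrableOn (fun s : ℝ => Real.exp (c^2) * (s ^ p * Real.exp (-(1/4) * s^2)))
      (Ioi 0) := (integrableOn_rpow_mul_exp_neg_mul_sq (by norm_num) hp).const_mul _
  refine Integrable.mono' hbound (measurable_kernel p c).aestronglyMeasurable ?_
  filter_upwards [ae_restrict_mem measurableSet_Ioi] with s hs
  have hs' : (0:ℝ) < s := hs
  rw [Real.norm_eq_abs, abs_mul, abs_of_pos (Real.rpow_pos_of_pos hs' p),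
    abs_of_pos (Real.exp_pos _), mul_comm (Real.exp (c^2)), mul_assoc, ← Real.exp_add]
  refine mul_le_mul_of_nonneg_left (Real.exp_le_exp.2 ?_) (Real.rpow_pos_of_pos hs' p).le
  nlinarith [sq_nonneg (c - s/2)]

lemma exp_tsum (u : ℝ) : ∑' n : ℕ, u ^ n / (Nat.factorial n : ℝ) = Real.exp u := by
  rw [Real.exp_eq_exp_ℝ, NormedSpace.exp_eq_tsum_div]

lemma key (p x : ℝ) (hp : -1 < p) :
    ∫ s in Ioi (0:ℝ), s ^ p * Real.exp (x * s - s^2/2)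
      = ∑' n : ℕ, x ^ n / (Nat.factorial n : ℝ) *
          (2 ^ ((p + n - 1)/2) * Real.Gamma ((p + n + 1)/2)) := by
  set F : ℕ → ℝ → ℝ := fun n s => x ^ n / (Nat.factorial n : ℝ) *
    (s ^ (p + n) * Real.exp (-s^2/2)) with hF
  have hmeas : ∀ n : ℕ, Measurable (F n) := by
    intro n
    rw [hF]
    fun_prop
  -- pointwise sum on Ioi 0
  have hsum_pt : ∀ s : ℝ, s ∈ Ioi (0:ℝ) →
      ∑' n, F n s = s ^ p * Real.exp (x * s - s^2/2) := by
    intro s hs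
    have hs' : (0:ℝ) < s := hs
    have hterm : ∀ n : ℕ, F n s =
        (s ^ p * Real.exp (-s^2/2)) * ((x*s) ^ n / (Nat.factorial n : ℝ)) := by
      intro n
      rw [hF]
      simp only
      rw [Real.rpow_add hs', Real.rpow_natCast, mul_pow]
      ring
    rw [tsum_congr hterm, tsum_mul_left, exp_tsum, mul_assoc, ← Real.exp_add]
    ring_nf
  -- integrability of each term
  have hint : ∀ n : ℕ, IntegrableOn (F n) (Ioi 0) := by
    intro n
    have h1 := integrable_kernel (p + n) 0 (by
      have : (0:ℝ) ≤ n := Nat.cast_nonneg n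
      linarith)
    have h2 : (fun s : ℝ => s ^ (p + (n:ℝ)) * Real.exp (0 * s - s^2/2)) =
        (fun s : ℝ => s ^ (p + (n:ℝ)) * Real.exp (-s^2/2)) := by
      funext s; ring_nf
    rw [h2] at h1
    exact h1.const_mul _
  -- the lintegral bound
  have hbound : ∑' n : ℕ, ∫⁻ s in Ioi (0:ℝ), ‖F n s‖₊ ≠ ⊤ := by
    have hnorm : ∀ n : ℕ, ∫⁻ s in Ioi (0:ℝ), (‖F n s‖₊ : ENNReal) =
        ∫⁻ s in Ioi (0:ℝ), ENNReal.ofReal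
          (|x| ^ n / (Nat.factorial n : ℝ) * (s ^ p * Real.exp (-s^2/2)) * s ^ n) := by
      intro n
      refine lintegral_congr_ae ?_
      filter_upwards [ae_restrict_mem measurableSet_Ioi] with s hs
      have hs' : (0:ℝ) < s := hs
      rw [← enorm_eq_nnnorm, Real.enorm_eq_ofReal_abs, hF]
      congr 1
      simp only [Real.norm_eq_abs, abs_mul, abs_div, abs_pow, abs_of_pos
        (Real.rpow_pos_of_pos hs' (p + n)), abs_of_pos (Real.exp_pos _),
        Nat.abs_cast]
      rw [Real.rpow_add hs', Real.rpow_natCast]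
      ring
    rw [tsum_congr hnorm, ← lintegral_tsum (fun n => by
      apply Measurable.aemeasurable
      apply ENNReal.measurable_ofReal.comp
      fun_prop)]
    have hpt : ∀ᵐ s ∂(volume.restrict (Ioi (0:ℝ))),
        (∑' n : ℕ, ENNReal.ofReal
          (|x| ^ n / (Nat.factorial n : ℝ) * (s ^ p * Real.exp (-s^2/2)) * s ^ n))
        = ENNReal.ofReal (s ^ p * Real.exp (|x| * s - s^2/2)) := by
      filter_upwards [ae_restrict_mem measurableSet_Ioi] with s hs
      have hs' : (0:ℝ) < s := hs
      have hnn : ∀ n : ℕ, 0 ≤ |x| ^ n / (Nat.factorial n : ℝ) *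
          (s ^ p * Real.exp (-s^2/2)) * s ^ n := by
        intro n
        have := (Real.rpow_pos_of_pos hs' p).le
        positivity
      have hsmm : Summable (fun n : ℕ => |x| ^ n / (Nat.factorial n : ℝ) *
          (s ^ p * Real.exp (-s^2/2)) * s ^ n) := by
        have : (fun n : ℕ => |x| ^ n / (Nat.factorial n : ℝ) *
            (s ^ p * Real.exp (-s^2/2)) * s ^ n) =
            (fun n : ℕ => (s ^ p * Real.exp (-s^2/2)) * ((|x| * s) ^ n / (Nat.factorial n : ℝ))) := by
          funext n; rw [mul_pow]; ring
        rw [this]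
        exact (Real.summable_pow_div_factorial (|x| * s)).mul_left _
      rw [← ENNReal.ofReal_tsum_of_nonneg hnn hsmm]
      congr 1
      have : (fun n : ℕ => |x| ^ n / (Nat.factorial n : ℝ) *
          (s ^ p * Real.exp (-s^2/2)) * s ^ n) =
          (fun n : ℕ => (s ^ p * Real.exp (-s^2/2)) * ((|x| * s) ^ n / (Nat.factorial n : ℝ))) := by
        funext n; rw [mul_pow]; ring
      rw [this, tsum_mul_left, exp_tsum, mul_assoc, ← Real.exp_add]
      ring_nf
    rw [lintegral_congr_ae hpt]
    exact ((integrable_kernel p |x| hp).lintegral_lt_top).ne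
  -- put it together
  have hswap := MeasureTheory.integral_tsum (μ := volume.restrict (Ioi (0:ℝ)))
    (f := F) (fun n => (hmeas n).aestronglyMeasurable) hbound
  have hL : ∫ s in Ioi (0:ℝ), ∑' n, F n s = ∫ s in Ioi (0:ℝ), s ^ p * Real.exp (x * s - s^2/2) :=
    setIntegral_congr_fun measurableSet_Ioi hsum_pt
  rw [hL] at hswap
  rw [hswap]
  refine tsum_congr fun n => ?_
  rw [hF]
  simp only
  rw [MeasureTheory.integral_const_mul,
    moment (p + n) (by have : (0:ℝ) ≤ n := Nat.cast_nonneg n; linarith)]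

lemma term_even (a x : ℝ) (ha : 0 < a) (m : ℕ) :
    x ^ (2*m) / ((2*m).factorial : ℝ) *
      (2 ^ ((2*a - 1 + (2*m : ℕ) - 1)/2) * Real.Gamma ((2*a - 1 + (2*m : ℕ) + 1)/2))
    = (2 ^ (a-1) * Real.Gamma a) *
        ((ascPochhammer ℝ m).eval a * (x^2/2) ^ m /
          ((ascPochhammer ℝ m).eval (1/2) * (Nat.factorial m : ℝ))) := by
  have h1 : (2*a - 1 + ((2*m : ℕ) : ℝ) + 1)/2 = a + m := by push_cast; ring
  have h2 : (2*a - 1 + ((2*m : ℕ) : ℝ) - 1)/2 = (a - 1) + m := by push_cast; ring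
  rw [h1, h2, asc_Gamma a ha, Real.rpow_add two_pos, Real.rpow_natCast, fact_two_mul,
    pow_mul, div_pow]
  have e1 : (0:ℝ) < (ascPochhammer ℝ m).eval (1/2) := ascPochhammer_pos m _ (by norm_num)
  have e2 : ((Nat.factorial m : ℝ)) ≠ 0 := Nat.cast_ne_zero.2 m.factorial_ne_zero
  have e3 : ((4:ℝ)) ^ m ≠ 0 := by positivity
  have e4 : ((2:ℝ)) ^ m ≠ 0 := by positivity
  field_simp
  ring_nf
  rw [show ((4:ℝ)) ^ m = 2 ^ m * 2 ^ m by rw [← mul_pow]; norm_num]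
  ring

lemma term_odd (a x : ℝ) (ha : 0 < a) (m : ℕ) :
    x ^ (2*m+1) / ((2*m+1).factorial : ℝ) *
      (2 ^ ((2*a - 1 + (2*m+1 : ℕ) - 1)/2) * Real.Gamma ((2*a - 1 + (2*m+1 : ℕ) + 1)/2))
    = (x * (2 ^ (a - 1/2) * Real.Gamma (a + 1/2))) *
        ((ascPochhammer ℝ m).eval (a + 1/2) * (x^2/2) ^ m /
          ((ascPochhammer ℝ m).eval (3/2) * (Nat.factorial m : ℝ))) := by
  have h1 : (2*a - 1 + ((2*m+1 : ℕ) : ℝ) + 1)/2 = (a + 1/2) + m := by push_cast; ring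
  have h2 : (2*a - 1 + ((2*m+1 : ℕ) : ℝ) - 1)/2 = (a - 1/2) + m := by push_cast; ring
  rw [h1, h2, asc_Gamma (a + 1/2) (by linarith), Real.rpow_add two_pos, Real.rpow_natCast,
    fact_two_mul_add_one, pow_succ, pow_mul, div_pow]
  have e1 : (0:ℝ) < (ascPochhammer ℝ m).eval (3/2) := ascPochhammer_pos m _ (by norm_num)
  have e2 : ((Nat.factorial m : ℝ)) ≠ 0 := Nat.cast_ne_zero.2 m.factorial_ne_zero
  have e3 : ((4:ℝ)) ^ m ≠ 0 := by positivity
  have e4 : ((2:ℝ)) ^ m ≠ 0 := by positivity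
  field_simp
  ring_nf
  rw [show ((4:ℝ)) ^ m = 2 ^ m * 2 ^ m by rw [← mul_pow]; norm_num]
  ring

lemma series_eq (a x : ℝ) (ha : 0 < a) (hx : x ≠ 0) :
    ∑' n : ℕ, x ^ n / (Nat.factorial n : ℝ) *
        (2 ^ ((2*a - 1 + n - 1)/2) * Real.Gamma ((2*a - 1 + n + 1)/2))
    = (2 ^ (a-1) * Real.Gamma a) * M a (1/2) (x^2/2)
      + (x * (2 ^ (a - 1/2) * Real.Gamma (a + 1/2))) * M (a + 1/2) (3/2) (x^2/2) := by
  have hz : 0 < x^2/2 := by positivity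
  set f : ℕ → ℝ := fun n => x ^ n / (Nat.factorial n : ℝ) *
      (2 ^ ((2*a - 1 + n - 1)/2) * Real.Gamma ((2*a - 1 + n + 1)/2)) with hf
  have he : (fun m : ℕ => f (2*m)) = fun m =>
      (2 ^ (a-1) * Real.Gamma a) * ((ascPochhammer ℝ m).eval a * (x^2/2) ^ m /
        ((ascPochhammer ℝ m).eval (1/2) * (Nat.factorial m : ℝ))) := by
    funext m; exact term_even a x ha m
  have ho : (fun m : ℕ => f (2*m+1)) = fun m =>
      (x * (2 ^ (a - 1/2) * Real.Gamma (a + 1/2))) *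
        ((ascPochhammer ℝ m).eval (a + 1/2) * (x^2/2) ^ m /
          ((ascPochhammer ℝ m).eval (3/2) * (Nat.factorial m : ℝ))) := by
    funext m; exact term_odd a x ha m
  have hse : Summable (fun m : ℕ => f (2*m)) := by
    rw [he]; exact (summable_M a (1/2) _ ha (by norm_num) hz).mul_left _
  have hso : Summable (fun m : ℕ => f (2*m+1)) := by
    rw [ho]; exact (summable_M (a+1/2) (3/2) _ (by linarith) (by norm_num) hz).mul_left _
  rw [← tsum_even_add_odd hse hso, he, ho, tsum_mul_left, tsum_mul_left, M, M]

theorem stmt_4 (α : ℝ) (hα : 1 / 2 < α) :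
    Tendsto (fun y => G α y) atBot (nhds 0) := by
  set b : ℝ := 2 * α - 1 with hbdef
  have hb : 0 < b := by simp only [hbdef]; linarith
  have hsb : 0 < Real.sqrt b := Real.sqrt_pos.2 hb
  set a : ℝ := α / b - 1/2 with hadef
  have ha2 : a = 1 / (2*b) := by
    have hb' : b ≠ 0 := hb.ne'
    rw [hadef, hbdef]
    have h1 : (2*α - 1) ≠ 0 := by linarith
    field_simp
    rw [div_sub_one (by linarith)]
    ring
  have ha : 0 < a := by rw [ha2]; positivity
  have hγ : α / b = a + 1/2 := by rw [hadef]; ring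
  set p : ℝ := 2*a - 1 with hpdef
  have hp : -1 < p := by rw [hpdef]; linarith
  have hΓγ : 0 < Real.Gamma (a + 1/2) := Real.Gamma_pos_of_pos (add_pos ha (by norm_num))
  have hΓa : 0 < Real.Gamma a := Real.Gamma_pos_of_pos ha
  set D : ℝ := Real.sqrt b * 2 ^ (a - 1/2) * Real.Gamma (a + 1/2) with hDdef
  have hD : 0 < D := by
    have : (0:ℝ) < (2:ℝ) ^ (a - 1/2) := Real.rpow_pos_of_pos two_pos _
    positivity
  set I : ℝ → ℝ := fun y => ∫ s in Ioi (0:ℝ),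
    s ^ p * Real.exp ((y * Real.sqrt b) * s - s^2/2) with hIdef
  -- dominated convergence
  have htend : Tendsto I atBot (𝓝 0) := by
    have h0 : (0:ℝ) = ∫ s in Ioi (0:ℝ), (0:ℝ) := by simp
    rw [h0]
    apply tendsto_integral_filter_of_dominated_convergence
      (bound := fun s : ℝ => s ^ p * Real.exp (0 * s - s^2/2))
    · exact Filter.Eventually.of_forall fun y =>
        (measurable_kernel p (y * Real.sqrt b)).aestronglyMeasurable
    · filter_upwards [eventually_le_atBot (0:ℝ)] with y hy
      filter_upwards [ae_restrict_mem measurableSet_Ioi] with s hs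
      have hs' : (0:ℝ) < s := hs
      have hxs : (y * Real.sqrt b) * s ≤ 0 * s := by
        apply mul_le_mul_of_nonneg_right _ hs'.le
        exact mul_nonpos_of_nonpos_of_nonneg hy hsb.le
      rw [Real.norm_eq_abs, abs_mul, abs_of_pos (Real.rpow_pos_of_pos hs' p),
        abs_of_pos (Real.exp_pos _)]
      exact mul_le_mul_of_nonneg_left (Real.exp_le_exp.2 (by linarith))
        (Real.rpow_pos_of_pos hs' p).le
    · exact integrable_kernel p 0 hp
    · filter_upwards [ae_restrict_mem measurableSet_Ioi] with s hs
      have hs' : (0:ℝ) < s := hs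
      have heq : ∀ y : ℝ, s ^ p * Real.exp ((y * Real.sqrt b) * s - s^2/2)
          = (s ^ p * Real.exp (-s^2/2)) * Real.exp (y * (Real.sqrt b * s)) := by
        intro y
        conv_rhs => rw [mul_assoc, ← Real.exp_add]
        ring_nf
      rw [show (0:ℝ) = (s ^ p * Real.exp (-s^2/2)) * 0 by ring]
      refine Tendsto.congr (fun y => (heq y).symm) (Tendsto.const_mul _ ?_)
      refine Real.tendsto_exp_atBot.comp ?_
      exact Tendsto.atBot_mul_const (by positivity) tendsto_id
  -- identity
  have heqG : ∀ y : ℝ, y < 0 → G α y = I y / D := by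
    intro y hy
    have hx : y * Real.sqrt b ≠ 0 := by
      intro h
      rcases mul_eq_zero.1 h with h | h
      · exact hy.ne h
      · exact hsb.ne' h
    have hIy : I y = (2 ^ (a-1) * Real.Gamma a) * M a (1/2) ((y * Real.sqrt b)^2/2)
        + ((y * Real.sqrt b) * (2 ^ (a - 1/2) * Real.Gamma (a + 1/2))) *
            M (a + 1/2) (3/2) ((y * Real.sqrt b)^2/2) := by
      rw [hIdef]
      simp only
      simp only [hpdef]
      rw [key (2*a-1) (y * Real.sqrt b) (by rw [hpdef] at hp; exact hp)]
      exact series_eq a (y * Real.sqrt b) ha hx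
    have hz : (y * Real.sqrt b)^2/2 = y ^ 2 * b / 2 := by
      rw [mul_pow, Real.sq_sqrt hb.le]
    rw [hz] at hIy
    rw [eq_div_iff hD.ne']
    rw [G]
    rw [show α / (2 * α - 1) = a + 1/2 from hγ, show a + 1/2 - 1/2 = a by ring]
    rw [hIy, hDdef]
    have hs2 : Real.sqrt (2 * b) = 2 ^ ((1:ℝ)/2) * Real.sqrt b := by
      rw [Real.sqrt_mul (by norm_num) b, Real.sqrt_eq_rpow]
    have h2a : (2:ℝ) ^ (a - 1/2) = 2 ^ (a-1) * 2 ^ ((1:ℝ)/2) := by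
      rw [← Real.rpow_add two_pos]; ring_nf
    rw [hs2, h2a]
    have hh : ((2:ℝ) ^ ((1:ℝ)/2)) ≠ 0 := (Real.rpow_pos_of_pos two_pos _).ne'
    field_simp
    ring
  have hev : (fun y => G α y) =ᶠ[atBot] fun y => I y / D := by
    filter_upwards [eventually_lt_atBot (0:ℝ)] with y hy
    exact heqG y hy
  have : Tendsto (fun y => I y / D) atBot (𝓝 (0 / D)) := htend.div_const D
  rw [zero_div] at this
  exact Tendsto.congr' hev.symm this
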